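/- Let α be a set of reals > 1. If a ∈ T(α) and ε > 0, then there exists c ∈ T(α) with 1 < c < 1 + ε. -/

import Mathlib

noncomputable section

/-- The homothetic copy of a plane figure `S` under `x ↦ r • x + v`. -/
def homothety (r : ℝ) (v : ℝ × ℝ) (S : Set (ℝ × ℝ)) : Set (ℝ × ℝ) :=
  (fun x : ℝ × ℝ => (r * x.1 + v.1, r * x.2 + v.2)) '' S

/-- `S` is tiled by homothetic copies of figures from the family `F`:
`S` is a union of finitely many homothetic copies of members of `F`
whose interiors are pairwise disjoint. -/
def IsTiling (S : Set (ℝ × ℝ)) (F : Set (Set (ℝ × ℝ))) : Prop :=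
  ∃ (n : ℕ) (r : Fin n → ℝ) (v : Fin n → ℝ × ℝ) (t : Fin n → Set (ℝ × ℝ)),
    (∀ i, t i ∈ F) ∧ (∀ i, 0 < r i) ∧
    S = ⋃ i, homothety (r i) (v i) (t i) ∧
    ∀ i j, i ≠ j →
      interior (homothety (r i) (v i) (t i)) ∩ interior (homothety (r j) (v j) (t j)) = ∅
/-- The standard trapezoid `t(a)`: unit height, horizontal bases `a+1` and `a-1`,
base angles `45°`, midline `a`. -/
def stdTrap (a : ℝ) : Set (ℝ × ℝ) :=
  convexHull ℝ ({(0, 0), (a + 1, 0), (a, 1), (1, 1)} : Set (ℝ × ℝ))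

/-- The standard parallelogram `p(a)`: unit height, horizontal bases of length `a`. -/
def stdPar (a : ℝ) : Set (ℝ × ℝ) :=
  convexHull ℝ ({(0, 0), (a, 0), (a + 1, 1), (1, 1)} : Set (ℝ × ℝ))
/-- `T(α)`: the set of `b > 1` such that `t(b)` is tiled by homothetic copies of the
trapezoids `t(a)`, `a ∈ α`. -/
def Tset (α : Set ℝ) : Set ℝ :=
  {b | 1 < b ∧ IsTiling (stdTrap b) (stdTrap '' α)}

/-- `P(α)`: the set of `b > 0` such that `p(b)` is tiled by homothetic copies of the
trapezoids `t(a)`, `a ∈ α`. -/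
def Pset (α : Set ℝ) : Set ℝ :=
  {b | 0 < b ∧ IsTiling (stdPar b) (stdTrap '' α)}


lemma stdTrap_eq {b : ℝ} (hb : 1 < b) :
    stdTrap b = {p : ℝ × ℝ | 0 ≤ p.2 ∧ p.2 ≤ 1 ∧ p.2 ≤ p.1 ∧ p.1 ≤ b + 1 - p.2} := by
  apply Set.Subset.antisymm
  · apply convexHull_min
    · rintro p hp
      simp only [Set.mem_insert_iff, Set.mem_singleton_iff] at hp
      rcases hp with rfl | rfl | rfl | rfl <;>
        simp only [Set.mem_setOf_eq] <;> constructor <;> norm_num <;> linarith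
    · intro p hp q hq s t hs ht hst
      simp only [Set.mem_setOf_eq] at hp hq ⊢
      obtain ⟨hp1, hp2, hp3, hp4⟩ := hp
      obtain ⟨hq1, hq2, hq3, hq4⟩ := hq
      have e1 : (s • p + t • q).1 = s * p.1 + t * q.1 := rfl
      have e2 : (s • p + t • q).2 = s * p.2 + t * q.2 := rfl
      refine ⟨?_, ?_, ?_, ?_⟩ <;> simp only [e1, e2] <;>
        nlinarith [mul_nonneg hs hp1, mul_nonneg ht hq1, mul_le_mul_of_nonneg_left hp2 hs,
          mul_le_mul_of_nonneg_left hq2 ht, mul_le_mul_of_nonneg_left hp3 hs,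
          mul_le_mul_of_nonneg_left hq3 ht, mul_le_mul_of_nonneg_left hp4 hs,
          mul_le_mul_of_nonneg_left hq4 ht]
  · rintro ⟨x, y⟩ ⟨h0, h1, h2, h3⟩
    simp only at h0 h1 h2 h3
    have hden : (0:ℝ) < b + 1 - 2 * y := by linarith
    have hL : ((y, y) : ℝ × ℝ) ∈ stdTrap b := by
      have := (convex_convexHull ℝ ({((0:ℝ), (0:ℝ)), (b + 1, 0), (b, 1), (1, 1)} : Set (ℝ × ℝ))).segment_subset
        (subset_convexHull ℝ _ (by simp : ((0:ℝ),(0:ℝ)) ∈ _))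
        (subset_convexHull ℝ _ (by simp : ((1:ℝ),(1:ℝ)) ∈ _))
      apply this
      exact ⟨1 - y, y, by linarith, h0, by ring, by simp [Prod.ext_iff]⟩
    have hR : ((b + 1 - y, y) : ℝ × ℝ) ∈ stdTrap b := by
      have := (convex_convexHull ℝ ({((0:ℝ), (0:ℝ)), (b + 1, 0), (b, 1), (1, 1)} : Set (ℝ × ℝ))).segment_subset
        (subset_convexHull ℝ _ (by simp : ((b+1:ℝ),(0:ℝ)) ∈ _))
        (subset_convexHull ℝ _ (by simp : ((b:ℝ),(1:ℝ)) ∈ _))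
      apply this
      exact ⟨1 - y, y, by linarith, h0, by ring, by simp [Prod.ext_iff]; ring⟩
    have hseg := (convex_convexHull ℝ ({((0:ℝ), (0:ℝ)), (b + 1, 0), (b, 1), (1, 1)} : Set (ℝ × ℝ))).segment_subset hL hR
    apply hseg
    refine ⟨1 - (x - y) / (b + 1 - 2 * y), (x - y) / (b + 1 - 2 * y), ?_, ?_, by ring, ?_⟩
    · have : (x - y) / (b + 1 - 2 * y) ≤ 1 := by
        rw [div_le_one hden]; linarith
      linarith
    · exact div_nonneg (by linarith) hden.le
    · simp only [Prod.ext_iff, Prod.smul_mk, smul_eq_mul, Prod.mk_add_mk]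
      constructor
      · linear_combination (div_mul_cancel₀ (x - y) hden.ne' : (x - y) / (b + 1 - 2 * y) * (b + 1 - 2 * y) = x - y)
      · field_simp
        ring

lemma homothety_stdTrap {b r : ℝ} (hb : 1 < b) (hr : 0 < r) (v : ℝ × ℝ) :
    homothety r v (stdTrap b) =
      {p : ℝ × ℝ | v.2 ≤ p.2 ∧ p.2 ≤ v.2 + r ∧ p.2 - v.2 + v.1 ≤ p.1 ∧
        p.1 ≤ v.1 + r * (b + 1) - (p.2 - v.2)} := by
  ext p
  constructor
  · rintro ⟨q, hq, rfl⟩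
    rw [stdTrap_eq hb] at hq
    obtain ⟨h0, h1, h2, h3⟩ := hq
    simp only [Set.mem_setOf_eq]
    refine ⟨by nlinarith, by nlinarith, by nlinarith, by nlinarith⟩
  · rintro ⟨h0, h1, h2, h3⟩
    refine ⟨((p.1 - v.1) / r, (p.2 - v.2) / r), ?_, ?_⟩
    · rw [stdTrap_eq hb]
      refine ⟨div_nonneg (by linarith) hr.le, ?_, ?_, ?_⟩
      · rw [div_le_one hr]; linarith
      · rw [div_le_div_iff₀ hr hr]; nlinarith
      · simp only
        rw [div_le_iff₀ hr, sub_mul, div_mul_cancel₀ _ hr.ne']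
        nlinarith
    · simp only
      rw [Prod.ext_iff]
      constructor <;> simp <;> field_simp <;> ring

lemma exists_step (f : ℕ → ℝ) (y : ℝ) :
    ∀ n : ℕ, n ≠ 0 → f 0 ≤ y → y ≤ f n → ∃ k, k < n ∧ f k ≤ y ∧ y ≤ f (k + 1) := by
  intro n
  induction n with
  | zero => intro h; exact absurd rfl h
  | succ m ih =>
    intro _ h0 h1
    by_cases hm : m = 0
    · subst hm; exact ⟨0, Nat.zero_lt_one, h0, h1⟩
    · by_cases hy : y ≤ f m
      · obtain ⟨k, hk, hk1, hk2⟩ := ih hm h0 hy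
        exact ⟨k, Nat.lt_succ_of_lt hk, hk1, hk2⟩
      · exact ⟨m, Nat.lt_succ_self m, (not_le.1 hy).le, h1⟩

/-- **Property 7).** If `a ∈ T(α)` and `ε > 0` then there is `c ∈ T(α)` with `1 < c < 1 + ε`. -/
theorem statement11 (α : Set ℝ) (hα : ∀ x ∈ α, 1 < x)
    (a : ℝ) (ha : a ∈ Tset α) (ε : ℝ) (hε : 0 < ε) :
    ∃ c ∈ Tset α, 1 < c ∧ c < 1 + ε := by
  obtain ⟨ha1, n₀, r₀, v₀, t₀, ht₀, hr₀, hU, _⟩ := ha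
  -- extract an element a₀ of α
  have hmem : ((0:ℝ), (0:ℝ)) ∈ stdTrap a := subset_convexHull ℝ _ (by simp)
  rw [hU] at hmem
  obtain ⟨i₀, _⟩ := Set.mem_iUnion.1 hmem
  obtain ⟨a₀, ha₀α, -⟩ := ht₀ i₀
  have ha₀ : 1 < a₀ := hα _ ha₀α
  set q : ℝ := (a₀ - 1) / (a₀ + 1) with hqdef
  have hq0 : 0 < q := div_pos (by linarith) (by linarith)
  have hq1 : q < 1 := (div_lt_one (by linarith)).2 (by linarith)
  obtain ⟨n, hn⟩ := exists_pow_lt_of_lt_one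
    (div_pos hε (by linarith) : (0:ℝ) < ε / (2 + ε)) hq1
  have hεlt : ε / (2 + ε) < 1 := (div_lt_one (by linarith)).2 (by linarith)
  have hqn1 : q ^ n < 1 := hn.trans hεlt
  have hqn0 : 0 < q ^ n := pow_pos hq0 n
  have hn0 : n ≠ 0 := by rintro rfl; simp at hn; linarith
  have hD : 0 < 1 - q ^ n := by linarith
  set c : ℝ := (1 + q ^ n) / (1 - q ^ n) with hcdef
  have hc1 : 1 < c := by rw [lt_div_iff₀ hD]; linarith
  have hcε : c < 1 + ε := by
    rw [div_lt_iff₀ hD]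
    have h2 := (lt_div_iff₀ (show (0:ℝ) < 2 + ε by linarith)).1 hn
    nlinarith
  have hc2 : c + 1 = 2 / (1 - q ^ n) := by rw [hcdef]; field_simp; ring
  set H : ℕ → ℝ := fun k => (1 - q ^ k) / (1 - q ^ n) with hHdef
  set R : ℕ → ℝ := fun k => q ^ k * (1 - q) / (1 - q ^ n) with hRdef
  have hR0 : ∀ k, 0 < R k := fun k =>
    div_pos (mul_pos (pow_pos hq0 k) (by linarith)) hD
  have hHstep : ∀ k, H (k + 1) = H k + R k := by
    intro k
    simp only [hHdef, hRdef]
    rw [← add_div]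
    congr 1
    ring
  have hH0 : H 0 = 0 := by simp [hHdef]
  have hHn : H n = 1 := by simp only [hHdef]; exact div_self hD.ne'
  have h2eq : (1 - q) * (a₀ + 1) = 2 := by
    rw [hqdef]; field_simp; ring
  have key : ∀ k, R k * (a₀ + 1) + 2 * H k = c + 1 := by
    intro k
    rw [hc2]
    simp only [hHdef, hRdef]
    rw [div_mul_eq_mul_div, ← mul_div_assoc, ← add_div]
    congr 1
    linear_combination (q ^ k) * h2eq
  have hHmono : ∀ j k : ℕ, j ≤ k → H j ≤ H k := by
    intro j k h
    simp only [hHdef]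
    apply (div_le_div_iff_of_pos_right hD).2
    have := pow_le_pow_of_le_one hq0.le hq1.le h
    linarith
  have hH0le : ∀ k : ℕ, 0 ≤ H k := by
    intro k
    have := pow_le_one₀ hq0.le hq1.le (n := k)
    simp only [hHdef]
    exact div_nonneg (by linarith) hD.le
  have hHle1 : ∀ k : ℕ, k ≤ n → H k ≤ 1 := by
    intro k hk
    simp only [hHdef]
    rw [div_le_one hD]
    have := pow_le_pow_of_le_one hq0.le hq1.le hk
    linarith
  have hpiece : ∀ i : Fin n, homothety (R i.val) (H i.val, H i.val) (stdTrap a₀) =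
      {p : ℝ × ℝ | H i.val ≤ p.2 ∧ p.2 ≤ H (i.val + 1) ∧ p.2 ≤ p.1 ∧ p.1 ≤ c + 1 - p.2} := by
    intro i
    rw [homothety_stdTrap ha₀ (hR0 i.val)]
    have k1 := key i.val
    have k2 := hHstep i.val
    ext p
    simp only [Set.mem_setOf_eq]
    constructor <;> rintro ⟨u1, u2, u3, u4⟩ <;>
      exact ⟨by linarith, by linarith, by linarith, by linarith⟩
  refine ⟨c, ⟨hc1, n, fun i => R i.val, fun i => (H i.val, H i.val), fun _ => stdTrap a₀,
      fun _ => Set.mem_image_of_mem _ ha₀α, fun i => hR0 i.val, ?_, ?_⟩, hc1, hcε⟩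
  · rw [stdTrap_eq hc1]
    ext p
    simp only [Set.mem_iUnion, Set.mem_setOf_eq]
    constructor
    · rintro ⟨h0, h1, h2, h3⟩
      obtain ⟨k, hk, hk1, hk2⟩ := exists_step H p.2 n hn0 (by rw [hH0]; exact h0)
        (by rw [hHn]; exact h1)
      exact ⟨⟨k, hk⟩, by rw [hpiece ⟨k, hk⟩]; exact ⟨hk1, hk2, h2, h3⟩⟩
    · rintro ⟨i, hi⟩
      rw [hpiece i] at hi
      obtain ⟨u1, u2, u3, u4⟩ := hi
      have e1 := hH0le i.val
      have e2 := hHle1 (i.val + 1) i.isLt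
      exact ⟨by linarith, by linarith, u3, u4⟩
  · have hsub : ∀ k : Fin n, interior (homothety (R k.val) (H k.val, H k.val) (stdTrap a₀)) ⊆
        {p : ℝ × ℝ | H k.val < p.2 ∧ p.2 < H (k.val + 1)} := by
      intro k p hp
      obtain ⟨δ, hδ, hball⟩ := Metric.isOpen_iff.1 isOpen_interior p hp
      have hd1 : dist ((p.1, p.2 + δ / 2) : ℝ × ℝ) p < δ := by
        rw [Prod.dist_eq]
        have e2 : dist (p.2 + δ / 2) (p.2) = δ / 2 := by
          rw [Real.dist_eq, show p.2 + δ / 2 - p.2 = δ / 2 by ring]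
          exact abs_of_pos (by linarith)
        show max (dist p.1 p.1) (dist (p.2 + δ / 2) p.2) < δ
        rw [dist_self, e2]
        exact max_lt hδ (by linarith)
      have hd2 : dist ((p.1, p.2 - δ / 2) : ℝ × ℝ) p < δ := by
        rw [Prod.dist_eq]
        have e2 : dist (p.2 - δ / 2) (p.2) = δ / 2 := by
          rw [Real.dist_eq, show p.2 - δ / 2 - p.2 = -(δ / 2) by ring, abs_neg]
          exact abs_of_pos (by linarith)
        show max (dist p.1 p.1) (dist (p.2 - δ / 2) p.2) < δ
        rw [dist_self, e2]
        exact max_lt hδ (by linarith)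
      have h1 := interior_subset (hball (Metric.mem_ball.2 hd1))
      have h2 := interior_subset (hball (Metric.mem_ball.2 hd2))
      rw [hpiece k] at h1 h2
      simp only [Set.mem_setOf_eq] at h1 h2
      obtain ⟨-, a2, -, -⟩ := h1
      obtain ⟨b1, -, -, -⟩ := h2
      exact ⟨by linarith, by linarith⟩
    intro i j hij
    ext p
    simp only [Set.mem_inter_iff, Set.mem_empty_iff_false, iff_false, not_and]
    intro hpi hpj
    have h1 := hsub i hpi
    have h2 := hsub j hpj
    simp only [Set.mem_setOf_eq] at h1 h2
    rcases hij.lt_or_gt with h | h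
    · have hle : H (i.val + 1) ≤ H j.val := hHmono _ _ (Nat.succ_le_of_lt h)
      linarith [h1.2, h2.1]
    · have hle : H (j.val + 1) ≤ H i.val := hHmono _ _ (Nat.succ_le_of_lt h)
      linarith [h1.1, h2.2]
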